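/- Let λ = λ(1) ⊃ ⋯ ⊃ λ(r) ⊃ ∅ and μ = μ(1) ⊃ ⋯ ⊃ μ(r) ⊃ ∅ be strictly decreasing chains of partitions with c^{λ(i)}_{λ(i)∩μ(i), λ(i+1)} ≠ 0 and c^{μ(i)}_{λ(i)∩μ(i), μ(i+1)} ≠ 0 for all 1 ≤ i ≤ r, and set ν_i = |λ(i) ∩ μ(i)|. Then ν = (ν₁, ..., ν_r) is a partition of |λ| (i.e., weakly decreasing with ∑ ν_i = |λ| = |μ|). -/

import Mathlib

/-- A partition, represented as a weakly decreasing function `ℕ → ℕ` that is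
eventually zero. -/
def IsPartitionFn (f : ℕ → ℕ) : Prop :=
  (∀ i j : ℕ, i ≤ j → f j ≤ f i) ∧ ∃ N : ℕ, ∀ i : ℕ, N ≤ i → f i = 0

/-- The size (number of cells of the Young diagram) of a partition `f`. -/
noncomputable def psize (f : ℕ → ℕ) : ℕ :=
  Nat.card {c : ℕ × ℕ // c.2 < f c.1}

/-- Membership of a cell `c = (row, col)` in the skew diagram `nu / lam`. -/
def inSkew (lam nu : ℕ → ℕ) (c : ℕ × ℕ) : Prop :=
  lam c.1 ≤ c.2 ∧ c.2 < nu c.1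

/-- `T` is a Littlewood–Richardson skew tableau of shape `nu / lam` and weight `mu`:
a filling of the skew diagram with positive entries (and `0` outside), weakly
increasing along rows, strictly increasing down columns, with `mu r` entries equal to
`r + 1`, whose reverse reading word (right-to-left along rows, top to bottom) is a
lattice (ballot) word. -/
def IsLRFilling (lam mu nu : ℕ → ℕ) (T : ℕ × ℕ → ℕ) : Prop :=
  (∀ c : ℕ × ℕ, ¬ inSkew lam nu c → T c = 0) ∧
  (∀ c : ℕ × ℕ, inSkew lam nu c → 1 ≤ T c) ∧
  (∀ i j j' : ℕ, j ≤ j' → inSkew lam nu (i, j) → inSkew lam nu (i, j') →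
    T (i, j) ≤ T (i, j')) ∧
  (∀ i i' j : ℕ, i < i' → inSkew lam nu (i, j) → inSkew lam nu (i', j) →
    T (i, j) < T (i', j)) ∧
  (∀ r : ℕ, Nat.card {c : ℕ × ℕ // inSkew lam nu c ∧ T c = r + 1} = mu r) ∧
  (∀ (d : ℕ × ℕ) (r : ℕ),
    Nat.card {c : ℕ × ℕ // inSkew lam nu c ∧
        (c.1 < d.1 ∨ (c.1 = d.1 ∧ d.2 ≤ c.2)) ∧ T c = r + 2} ≤
      Nat.card {c : ℕ × ℕ // inSkew lam nu c ∧
        (c.1 < d.1 ∨ (c.1 = d.1 ∧ d.2 ≤ c.2)) ∧ T c = r + 1})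

/-- The Littlewood–Richardson coefficient `c^ν_{λ,μ}`, via the Littlewood–Richardson
rule: the number of LR skew tableaux of shape `ν / λ` and weight `μ`. -/
noncomputable def LRcoeff (lam mu nu : ℕ → ℕ) : ℕ :=
  Nat.card {T : ℕ × ℕ → ℕ // IsLRFilling lam mu nu T}

lemma card_subtype_eq_finset {p : ℕ × ℕ → Prop} (S : Finset (ℕ × ℕ))
    (h : ∀ c, p c ↔ c ∈ S) : Nat.card {c : ℕ × ℕ // p c} = S.card := by
  have h1 : {c : ℕ × ℕ | p c} = ↑S := Set.ext h
  calc Nat.card {c : ℕ × ℕ // p c} = Set.ncard {c : ℕ × ℕ | p c} :=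
        Nat.card_coe_set_eq _
    _ = S.card := by rw [h1, Set.ncard_coe_finset]

lemma psize_eq_sum (f : ℕ → ℕ) (hdec : ∀ i j : ℕ, i ≤ j → f j ≤ f i) (N : ℕ)
    (hN : ∀ i : ℕ, N ≤ i → f i = 0) : psize f = ∑ i ∈ Finset.range N, f i := by
  classical
  have key : ∀ c : ℕ × ℕ, c.2 < f c.1 ↔
      c ∈ (Finset.range N).biUnion
        (fun i => ({i} : Finset ℕ) ×ˢ Finset.range (f i)) := by
    intro c
    simp only [Finset.mem_biUnion, Finset.mem_product, Finset.mem_singleton,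
      Finset.mem_range]
    constructor
    · intro hc
      refine ⟨c.1, ?_, rfl, hc⟩
      by_contra h
      push_neg at h
      rw [hN c.1 h] at hc; omega
    · rintro ⟨i, _, rfl, hc⟩; exact hc
  rw [psize, card_subtype_eq_finset _ key, Finset.card_biUnion]
  · simp [Finset.card_product]
  · intro i _ j _ hij
    rw [Function.onFun, Finset.disjoint_left]
    rintro ⟨a, b⟩ ha hb
    simp only [Finset.mem_product, Finset.mem_singleton] at ha hb
    exact hij (ha.1 ▸ hb.1 ▸ rfl)

lemma psize_mono (f g : ℕ → ℕ) (hfg : ∀ j, g j ≤ f j) (hf : IsPartitionFn f) :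
    psize g ≤ psize f := by
  obtain ⟨hdec, N, hN⟩ := hf
  have hfin : {c : ℕ × ℕ | c.2 < f c.1}.Finite := by
    apply Set.Finite.subset (Finset.range N ×ˢ Finset.range (f 0)).finite_toSet
    intro c hc
    simp only [Set.mem_setOf_eq] at hc
    simp only [Finset.coe_product, Set.mem_prod, Finset.mem_coe, Finset.mem_range]
    constructor
    · by_contra h'; push_neg at h'; rw [hN c.1 h'] at hc; omega
    · exact lt_of_lt_of_le hc (hdec 0 c.1 (Nat.zero_le _))
  have hsub : {c : ℕ × ℕ | c.2 < g c.1} ⊆ {c : ℕ × ℕ | c.2 < f c.1} :=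
    fun c hc => lt_of_lt_of_le hc (hfg c.1)
  calc psize g = Set.ncard {c : ℕ × ℕ | c.2 < g c.1} := Nat.card_coe_set_eq _
    _ ≤ Set.ncard {c : ℕ × ℕ | c.2 < f c.1} := Set.ncard_le_ncard hsub hfin
    _ = psize f := (Nat.card_coe_set_eq _).symm

lemma psize_add (lam mu nu : ℕ → ℕ) (hl : ∀ j, lam j ≤ nu j)
    (hnu : IsPartitionFn nu) (hmu : IsPartitionFn mu)
    (h : LRcoeff lam mu nu ≠ 0) : psize nu = psize lam + psize mu := by
  classical
  rw [LRcoeff] at h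
  obtain ⟨⟨⟨T, hT⟩⟩, -⟩ := Nat.card_ne_zero.mp h
  obtain ⟨-, hT1, -, -, hT5, -⟩ := hT
  obtain ⟨hnudec, N, hN⟩ := hnu
  obtain ⟨hmudec, Nm, hNm⟩ := hmu
  set P := Finset.range N ×ˢ Finset.range (nu 0) with hP
  have hmemnu : ∀ c : ℕ × ℕ, c.2 < nu c.1 → c ∈ P := by
    intro c hc
    simp only [hP, Finset.mem_product, Finset.mem_range]
    constructor
    · by_contra h'; push_neg at h'; rw [hN c.1 h'] at hc; omega
    · exact lt_of_lt_of_le hc (hnudec 0 c.1 (Nat.zero_le _))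
  have hDnu : ∀ c : ℕ × ℕ, c.2 < nu c.1 ↔
      c ∈ P.filter (fun c => c.2 < nu c.1) := by
    intro c
    simp only [Finset.mem_filter]
    exact ⟨fun hc => ⟨hmemnu c hc, hc⟩, fun hc => hc.2⟩
  have hDlam : ∀ c : ℕ × ℕ, c.2 < lam c.1 ↔
      c ∈ P.filter (fun c => c.2 < lam c.1) := by
    intro c
    simp only [Finset.mem_filter]
    exact ⟨fun hc => ⟨hmemnu c (lt_of_lt_of_le hc (hl c.1)), hc⟩, fun hc => hc.2⟩
  have hSkew : ∀ c : ℕ × ℕ, inSkew lam nu c ↔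
      c ∈ P.filter (fun c => inSkew lam nu c) := by
    intro c
    simp only [Finset.mem_filter]
    exact ⟨fun hc => ⟨hmemnu c hc.2, hc⟩, fun hc => hc.2⟩
  have hEr : ∀ t : ℕ, ∀ c : ℕ × ℕ, (inSkew lam nu c ∧ T c = t + 1) ↔
      c ∈ P.filter (fun c => inSkew lam nu c ∧ T c = t + 1) := by
    intro t c
    simp only [Finset.mem_filter]
    exact ⟨fun hc => ⟨hmemnu c hc.1.2, hc⟩, fun hc => hc.2⟩
  have hErcard : ∀ t : ℕ,
      (P.filter (fun c => inSkew lam nu c ∧ T c = t + 1)).card = mu t := by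
    intro t
    rw [← card_subtype_eq_finset _ (hEr t)]
    exact hT5 t
  -- split diagram of nu
  have hsplit : P.filter (fun c => c.2 < nu c.1) =
      P.filter (fun c => c.2 < lam c.1) ∪ P.filter (fun c => inSkew lam nu c) := by
    rw [← Finset.filter_or]
    apply Finset.filter_congr
    intro c _
    have := hl c.1
    simp only [inSkew]
    omega
  have hdisj : Disjoint (P.filter (fun c => c.2 < lam c.1))
      (P.filter (fun c => inSkew lam nu c)) := by
    rw [Finset.disjoint_left]
    intro c hc hc'
    rw [Finset.mem_filter] at hc hc'
    exact absurd hc.2 (not_lt.mpr hc'.2.1)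
  -- skew diagram as union of level sets
  have hskewsplit : P.filter (fun c => inSkew lam nu c) =
      (Finset.range Nm).biUnion
        (fun t => P.filter (fun c => inSkew lam nu c ∧ T c = t + 1)) := by
    ext c
    simp only [Finset.mem_biUnion, Finset.mem_filter, Finset.mem_range]
    constructor
    · rintro ⟨hcP, hcS⟩
      have h1 : 1 ≤ T c := hT1 c hcS
      refine ⟨T c - 1, ?_, hcP, hcS, by omega⟩
      by_contra h'
      push_neg at h'
      have h0 := hErcard (T c - 1)
      rw [hNm _ h'] at h0
      have hmem := (hEr (T c - 1) c).mp ⟨hcS, by omega⟩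
      rw [Finset.card_eq_zero.mp h0] at hmem
      exact absurd hmem (Finset.notMem_empty c)
    · rintro ⟨t, _, hcP, hcS, -⟩
      exact ⟨hcP, hcS⟩
  have hskewcard : (P.filter (fun c => inSkew lam nu c)).card = psize mu := by
    rw [hskewsplit, Finset.card_biUnion]
    · rw [psize_eq_sum mu hmudec Nm hNm]
      exact Finset.sum_congr rfl fun t _ => hErcard t
    · intro s _ t _ hst
      rw [Function.onFun, Finset.disjoint_left]
      intro c hc hc'
      simp only [Finset.mem_filter] at hc hc'
      omega
  calc psize nu = (P.filter (fun c => c.2 < nu c.1)).card :=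
        card_subtype_eq_finset _ hDnu
    _ = (P.filter (fun c => c.2 < lam c.1)).card
        + (P.filter (fun c => inSkew lam nu c)).card := by
        rw [hsplit, Finset.card_union_of_disjoint hdisj]
    _ = psize lam + psize mu := by
        rw [hskewcard]
        exact congrArg (· + psize mu) (card_subtype_eq_finset _ hDlam).symm

lemma chain_mono (r : ℕ) (F : ℕ → ℕ → ℕ)
    (hdec : ∀ i : ℕ, i < r → ∀ j : ℕ, F (i + 1) j ≤ F i j) :
    ∀ i i' : ℕ, i ≤ i' → i' ≤ r → ∀ j : ℕ, F i' j ≤ F i j := by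
  intro i i' hii'
  induction i', hii' using Nat.le_induction with
  | base => intro _ _; exact le_rfl
  | succ n hn ih =>
    intro h j
    exact le_trans (hdec n (by omega) j) (ih (by omega) j)

/-- given strictly decreasing chains `λ = λ(0) ⊃ ⋯ ⊃ λ(r) = ∅` and
`μ = μ(0) ⊃ ⋯ ⊃ μ(r) = ∅` of partitions with
`c^{λ(i)}_{λ(i)∩μ(i), λ(i+1)} ≠ 0` and `c^{μ(i)}_{λ(i)∩μ(i), μ(i+1)} ≠ 0` for all
`i < r`, the sequence `ν_i = |λ(i) ∩ μ(i)|` is a partition of `|λ| = |μ|`. -/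
theorem strip_type_is_partition (r : ℕ) (hr : 0 < r) (L M : ℕ → ℕ → ℕ)
    (hLp : ∀ i : ℕ, i ≤ r → IsPartitionFn (L i))
    (hMp : ∀ i : ℕ, i ≤ r → IsPartitionFn (M i))
    (hsz : psize (L 0) = psize (M 0))
    (hLend : ∀ j : ℕ, L r j = 0) (hMend : ∀ j : ℕ, M r j = 0)
    (hLdec : ∀ i : ℕ, i < r → (∀ j : ℕ, L (i + 1) j ≤ L i j) ∧ L (i + 1) ≠ L i)
    (hMdec : ∀ i : ℕ, i < r → (∀ j : ℕ, M (i + 1) j ≤ M i j) ∧ M (i + 1) ≠ M i)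
    (hLc : ∀ i : ℕ, i < r →
      LRcoeff (fun j => min (L i j) (M i j)) (L (i + 1)) (L i) ≠ 0)
    (hMc : ∀ i : ℕ, i < r →
      LRcoeff (fun j => min (L i j) (M i j)) (M (i + 1)) (M i) ≠ 0) :
    (∀ i i' : ℕ, i ≤ i' → i' < r →
        psize (fun j => min (L i' j) (M i' j)) ≤ psize (fun j => min (L i j) (M i j))) ∧
      ∑ i ∈ Finset.range r, psize (fun j => min (L i j) (M i j)) = psize (L 0) := by
  have hminp : ∀ i : ℕ, i ≤ r → IsPartitionFn (fun j => min (L i j) (M i j)) := by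
    intro i hi
    obtain ⟨hLd, NL, hNL⟩ := hLp i hi
    obtain ⟨hMd, NM, hNM⟩ := hMp i hi
    refine ⟨fun a b hab => min_le_min (hLd a b hab) (hMd a b hab),
      NL, fun j hj => by simp [hNL j hj]⟩
  constructor
  · intro i i' hii' hi'r
    apply psize_mono
    · intro j
      exact min_le_min
        (chain_mono r L (fun k hk => (hLdec k hk).1) i i' hii' (by omega) j)
        (chain_mono r M (fun k hk => (hMdec k hk).1) i i' hii' (by omega) j)
    · exact hminp i (by omega)
  · have hkey : ∀ k : ℕ, k < r →
        psize (L k) = psize (fun j => min (L k j) (M k j)) + psize (L (k + 1)) :=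
      fun k hk => psize_add _ _ _ (fun j => min_le_left _ _)
        (hLp k hk.le) (hLp (k + 1) hk) (hLc k hk)
    have hzero : psize (L r) = 0 := by
      have he : IsEmpty {c : ℕ × ℕ // c.2 < L r c.1} := by
        refine ⟨fun ⟨c, hc⟩ => ?_⟩
        rw [hLend c.1] at hc
        exact absurd hc (Nat.not_lt_zero _)
      rw [psize]
      exact Nat.card_of_isEmpty
    have htel : ∀ k : ℕ, k ≤ r →
        ∑ i ∈ Finset.range k, psize (fun j => min (L i j) (M i j))
          + psize (L k) = psize (L 0) := by
      intro k
      induction k with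
      | zero => simp
      | succ n ih =>
        intro h
        rw [Finset.sum_range_succ]
        have h1 := ih (by omega)
        have h2 := hkey n (by omega)
        omega
    have := htel r le_rfl
    rw [hzero] at this
    omega
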